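/- Let n ≥ 1 and let μ be a Borel probability measure on ℝⁿ (the joint distribution of n observables X₁,…,Xₙ). Then there exist a probability space Ω, real-valued random variables X₁,…,Xₙ on Ω, and a random variable Λ : Ω → ℝⁿ such that: (a) the law of the vector (X₁,…,Xₙ) is μ; (b) each Xᵢ is measurable with respect to the σ-algebra generated by Λ (so Λ is deterministic: the conditional variance of each Xᵢ given Λ is zero almost surely); and (c) X₁,…,Xₙ are conditionally independent given the σ-algebra generated by Λ. In particular, a factorizing hidden variable exists whenever the observables have a joint probability distribution. -/

import Mathlib

open MeasureTheory

lemma indicator_iInter_preimage_eq_prod {n : ℕ} (B : Fin n → Set ℝ)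
    (X : Fin n → (Fin n → ℝ) → ℝ) (ω : Fin n → ℝ) :
    (⋂ i, X i ⁻¹' B i).indicator (fun _ => (1 : ℝ)) ω
      = ∏ i, (X i ⁻¹' B i).indicator (fun _ => (1 : ℝ)) ω := by
  by_cases h : ω ∈ ⋂ i, X i ⁻¹' B i
  · rw [Set.indicator_of_mem h]
    rw [Set.mem_iInter] at h
    rw [Finset.prod_eq_one]
    intro i _
    exact Set.indicator_of_mem (h i) _
  · rw [Set.indicator_of_notMem h]
    rw [Set.mem_iInter] at h
    push_neg at h
    obtain ⟨i, hi⟩ := h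
    exact (Finset.prod_eq_zero (Finset.mem_univ i)
      (Set.indicator_of_notMem hi _)).symm

/-- Fundamental factorization theorem (sufficiency direction, Suppes–Zanotti,
Holland–Rosenbaum): given a joint distribution `μ` of `n` observables on `ℝⁿ`, there are a
probability space `Ω`, random variables `X₁, …, Xₙ` with joint law `μ`, and a (deterministic)
hidden variable `Λ` such that each `Xᵢ` is measurable w.r.t. `σ(Λ)` and `X₁, …, Xₙ` are
conditionally independent given `σ(Λ)`. -/
theorem factorizing_hidden_variable_exists
    (n : ℕ) (hn : 1 ≤ n) (μ : Measure (Fin n → ℝ)) [IsProbabilityMeasure μ] :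
    ∃ (Ω : Type) (mΩ : MeasurableSpace Ω) (P : @Measure Ω mΩ)
      (_ : @IsProbabilityMeasure Ω mΩ P) (X : Fin n → Ω → ℝ) (Λ : Ω → (Fin n → ℝ)),
      (∀ i, Measurable[mΩ] (X i)) ∧
      Measurable[mΩ] Λ ∧
      -- (a) the law of the random vector (X₁, …, Xₙ) is μ
      @Measure.map Ω (Fin n → ℝ) mΩ _ (fun ω i => X i ω) P = μ ∧
      -- (b) each Xᵢ is measurable w.r.t. the σ-algebra generated by Λ (Λ is deterministic)
      (∀ i, Measurable[MeasurableSpace.comap Λ inferInstance] (X i)) ∧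
      -- (c) X₁, …, Xₙ are conditionally independent given σ(Λ)
      (∀ B : Fin n → Set ℝ, (∀ i, MeasurableSet (B i)) →
        MeasureTheory.condExp (MeasurableSpace.comap Λ inferInstance) P
            ((⋂ i, X i ⁻¹' B i).indicator fun _ => (1 : ℝ))
          =ᵐ[P] fun ω => ∏ i,
            MeasureTheory.condExp (MeasurableSpace.comap Λ inferInstance) P
              ((X i ⁻¹' B i).indicator fun _ => (1 : ℝ)) ω) := by
  refine ⟨Fin n → ℝ, inferInstance, μ, inferInstance,
    fun i ω => ω i, id, fun i => measurable_pi_apply i, measurable_id, ?_, ?_, ?_⟩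
  · simp [Measure.map_id]
  · intro i
    rw [MeasurableSpace.comap_id]
    exact measurable_pi_apply i
  · intro B hB
    rw [MeasurableSpace.comap_id]
    have hmeas : ∀ i, MeasurableSet ((fun ω : Fin n → ℝ => ω i) ⁻¹' B i) :=
      fun i => (measurable_pi_apply i) (hB i)
    have hint : ∀ (s : Set (Fin n → ℝ)), MeasurableSet s →
        Integrable (s.indicator fun _ => (1 : ℝ)) μ := by
      intro s hs
      exact (integrable_const (1 : ℝ)).indicator hs
    have key : ∀ (s : Set (Fin n → ℝ)), MeasurableSet s →
        condExp inferInstance μ (s.indicator fun _ => (1 : ℝ))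
          =ᵐ[μ] s.indicator fun _ => (1 : ℝ) := by
      intro s hs
      rw [condExp_of_stronglyMeasurable le_rfl
        ((stronglyMeasurable_const).indicator hs) (hint s hs)]
    have h1 := key _ (MeasurableSet.iInter hmeas)
    have h2 : ∀ i, condExp inferInstance μ
        (((fun ω : Fin n → ℝ => ω i) ⁻¹' B i).indicator fun _ => (1 : ℝ))
          =ᵐ[μ] ((fun ω : Fin n → ℝ => ω i) ⁻¹' B i).indicator fun _ => (1 : ℝ) :=
      fun i => key _ (hmeas i)
    refine h1.trans ?_
    have h3 : ∀ᵐ ω ∂μ, ∀ i, condExp inferInstance μ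
        (((fun o : Fin n → ℝ => o i) ⁻¹' B i).indicator fun _ => (1 : ℝ)) ω
          = ((fun o : Fin n → ℝ => o i) ⁻¹' B i).indicator (fun _ => (1 : ℝ)) ω :=
      MeasureTheory.ae_all_iff.mpr h2
    filter_upwards [h3] with ω hω
    rw [indicator_iInter_preimage_eq_prod B (fun i ω => ω i) ω]
    exact Finset.prod_congr rfl (fun i _ => (hω i).symm)
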